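/- Let m : ℝ → ℝ be continuous with m(x) > 0 for x > 0, m(x) < 0 for x < 0 (e.g., m odd and strictly increasing with m(0) = 0). Then the closed curve Γ(t) = sin t + i·m(cos t), t ∈ [0, 2π], avoids the origin and has winding number −1 around 0 in ℂ. -/

import Mathlib

open Complex Real

lemma glue_closed {f : ℝ → ℝ} {s t : Set ℝ} (hs : IsClosed s) (ht : IsClosed t)
    (hfs : ContinuousOn f s) (hft : ContinuousOn f t) : ContinuousOn f (s ∪ t) := by
  intro x hx
  apply ContinuousWithinAt.union
  · by_cases h : x ∈ s
    · exact hfs x h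
    · exact continuousWithinAt_of_notMem_closure (by rwa [hs.closure_eq])
  · by_cases h : x ∈ t
    · exact hft x h
    · exact continuousWithinAt_of_notMem_closure (by rwa [ht.closure_eq])

/-- The curve `Γ(t) = sin t + i·m(cos t)` avoids the origin, and its winding number
around `0` is `-1`: any (indeed, some) continuous argument function `arg` along `Γ`
on `[0, 2π]` changes by `-2π`. -/
theorem jackiw_rebbi_winding
    (m : ℝ → ℝ) (hm : Continuous m)
    (hpos : ∀ x > (0 : ℝ), m x > 0) (hneg : ∀ x < (0 : ℝ), m x < 0)
    (Γ : ℝ → ℂ) (hΓ : Γ = fun t => (Real.sin t : ℂ) + (m (Real.cos t) : ℂ) * I) :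
    (∀ t ∈ Set.Icc (0 : ℝ) (2 * π), Γ t ≠ 0) ∧
    ∃ a : ℝ → ℝ, ContinuousOn a (Set.Icc (0 : ℝ) (2 * π)) ∧
      (∀ t ∈ Set.Icc (0 : ℝ) (2 * π),
        Γ t = (‖Γ t‖ : ℂ) * Complex.exp ((a t : ℂ) * I)) ∧
      a (2 * π) - a 0 = 2 * π * (-1) := by
  subst hΓ
  -- basic facts
  have hre : ∀ t : ℝ, ((Real.sin t : ℂ) + (m (Real.cos t) : ℂ) * I).re = Real.sin t := by
    intro t
    simp only [Complex.add_re, Complex.ofReal_re, Complex.mul_re, Complex.I_re,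
      Complex.I_im, Complex.ofReal_im, mul_zero, mul_one, zero_mul, sub_zero]
    ring
  have him : ∀ t : ℝ, ((Real.sin t : ℂ) + (m (Real.cos t) : ℂ) * I).im = m (Real.cos t) := by
    intro t
    simp only [Complex.add_im, Complex.ofReal_im, Complex.mul_im, Complex.I_re,
      Complex.I_im, Complex.ofReal_re, mul_zero, mul_one, zero_mul, add_zero, zero_add]
  have hmne : ∀ t : ℝ, Real.sin t = 0 → m (Real.cos t) ≠ 0 := by
    intro t hst
    have h1 : Real.cos t ^ 2 = 1 := by
      have := Real.sin_sq_add_cos_sq t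
      nlinarith
    have : (Real.cos t - 1) * (Real.cos t + 1) = 0 := by nlinarith
    rcases mul_eq_zero.1 this with h | h
    · have hc : Real.cos t = 1 := by linarith
      have hp := hpos 1 one_pos
      rw [hc]; positivity
    · have hc : Real.cos t = -1 := by linarith
      have hp := hneg (-1) (by norm_num)
      rw [hc]; exact ne_of_lt hp
  have hne : ∀ t : ℝ, ((Real.sin t : ℂ) + (m (Real.cos t) : ℂ) * I) ≠ 0 := by
    intro t h
    have h1 : Real.sin t = 0 := by
      have := congrArg Complex.re h; rw [hre] at this; simpa using this
    have h2 : m (Real.cos t) = 0 := by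
      have := congrArg Complex.im h; simpa [him] using this
    exact hmne t h1 h2
  refine ⟨fun t _ => hne t, ?_⟩
  set Γ : ℝ → ℂ := fun t => (Real.sin t : ℂ) + (m (Real.cos t) : ℂ) * I with hΓ
  have hre' : ∀ t : ℝ, (Γ t).re = Real.sin t := hre
  have him' : ∀ t : ℝ, (Γ t).im = m (Real.cos t) := him
  have hΓcont : Continuous Γ := by
    apply Continuous.add
    · exact Complex.continuous_ofReal.comp Real.continuous_sin
    · exact (Complex.continuous_ofReal.comp (hm.comp Real.continuous_cos)).mul continuous_const
  classical
  set a : ℝ → ℝ := fun t => if t ≤ π then Complex.arg (Γ t) else Complex.arg (-Γ t) - π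
    with ha
  have hπ : (0:ℝ) < π := Real.pi_pos
  -- continuity of arg ∘ Γ on [0, π]
  have hc1 : ContinuousOn (fun t => Complex.arg (Γ t)) (Set.Icc 0 π) := by
    intro t ht
    apply ContinuousAt.continuousWithinAt
    apply (Complex.continuousAt_arg ?_).comp hΓcont.continuousAt
    by_cases hs : Real.sin t = 0
    · right; rw [him']; exact hmne t hs
    · left; rw [hre']
      exact lt_of_le_of_ne (Real.sin_nonneg_of_nonneg_of_le_pi ht.1 ht.2) (Ne.symm hs)
  -- continuity of arg ∘ (-Γ) - π on [π, 2π]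
  have hc2 : ContinuousOn (fun t => Complex.arg (-Γ t) - π) (Set.Icc π (2*π)) := by
    apply ContinuousOn.sub _ continuousOn_const
    intro t ht
    apply ContinuousAt.continuousWithinAt
    apply (Complex.continuousAt_arg ?_).comp hΓcont.neg.continuousAt
    by_cases hs : Real.sin t = 0
    · right
      simp only [Pi.neg_apply, Complex.neg_im, him']
      exact neg_ne_zero.2 (hmne t hs)
    · left
      have hle : Real.sin t ≤ 0 := by
        have h1 : Real.sin (t - π) = -Real.sin t := by
          rw [Real.sin_sub]; simp
        have h2 : 0 ≤ Real.sin (t - π) :=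
          Real.sin_nonneg_of_nonneg_of_le_pi (by linarith [ht.1]) (by linarith [ht.2])
        linarith
      rw [Pi.neg_apply, Complex.neg_re, hre']
      have : Real.sin t < 0 := lt_of_le_of_ne hle hs
      linarith
  -- a agrees with branch 1 on [0,π] and with branch 2 on [π,2π]
  have hmatch : Complex.arg (Γ π) = Complex.arg (-Γ π) - π := by
    have hmv : m (-1) < 0 := hneg (-1) (by norm_num)
    have hΓπ : Γ π = (m (-1) : ℂ) * I := by
      simp [hΓ, Real.sin_pi, Real.cos_pi]
    have h1 : Complex.arg (Γ π) = -(π/2) := by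
      rw [Complex.arg_eq_neg_pi_div_two_iff]
      constructor <;> simp [hΓπ, hmv]
    have h2 : Complex.arg (-Γ π) = π/2 := by
      rw [Complex.arg_eq_pi_div_two_iff]
      constructor <;> simp [hΓπ, hmv]
    rw [h1, h2]; ring
  have haeq1 : ∀ t ∈ Set.Icc (0:ℝ) π, a t = Complex.arg (Γ t) := by
    intro t ht; simp [ha, ht.2]
  have haeq2 : ∀ t ∈ Set.Icc π (2*π), a t = Complex.arg (-Γ t) - π := by
    intro t ht
    rcases eq_or_lt_of_le ht.1 with h | h
    · simp [ha, ← h, hmatch]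
    · simp [ha, not_le.2 h]
  have hcov : Set.Icc (0:ℝ) (2*π) = Set.Icc 0 π ∪ Set.Icc π (2*π) := by
    rw [Set.Icc_union_Icc_eq_Icc (le_of_lt hπ) (by linarith)]
  refine ⟨a, ?_, ?_, ?_⟩
  · rw [hcov]
    apply glue_closed isClosed_Icc isClosed_Icc
    · exact (hc1.congr haeq1)
    · exact (hc2.congr haeq2)
  · intro t ht
    rw [hcov] at ht
    rcases ht with ht | ht
    · rw [haeq1 t ht]
      exact (Complex.norm_mul_exp_arg_mul_I (Γ t)).symm
    · rw [haeq2 t ht]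
      have h1 : -Γ t = (‖-Γ t‖ : ℂ) * Complex.exp (Complex.arg (-Γ t) * I) :=
        (Complex.norm_mul_exp_arg_mul_I (-Γ t)).symm
      have h2 : Complex.exp (((Complex.arg (-Γ t) - π : ℝ) : ℂ) * I)
          = Complex.exp ((Complex.arg (-Γ t) : ℂ) * I) * Complex.exp (-(π * I)) := by
        rw [← Complex.exp_add]; push_cast; ring_nf
      have h3 : Complex.exp (-(π*I)) = -1 := by
        rw [Complex.exp_neg, Complex.exp_pi_mul_I]; norm_num
      have habs : ‖-Γ t‖ = ‖Γ t‖ := norm_neg _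
      rw [h2, h3, ← habs]
      linear_combination -h1
  · have ha0 : a 0 = π / 2 := by
      rw [haeq1 0 (Set.left_mem_Icc.2 (le_of_lt hπ))]
      rw [Complex.arg_eq_pi_div_two_iff]
      have hm1 : 0 < m 1 := hpos 1 one_pos
      constructor <;> simp [hΓ, Real.sin_zero, Real.cos_zero, hm1]
    have ha2π : a (2*π) = -(π/2) - π := by
      rw [haeq2 (2*π) (Set.right_mem_Icc.2 (by linarith))]
      have hm1 : 0 < m 1 := hpos 1 one_pos
      have : Complex.arg (-Γ (2*π)) = -(π/2) := by
        rw [Complex.arg_eq_neg_pi_div_two_iff]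
        constructor <;> simp [hΓ, Real.sin_two_pi, Real.cos_two_pi, hm1]
      rw [this]
    rw [ha0, ha2π]; ring
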